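/- Let N be a group and H a subgroup of N whose normalizer in N equals H. For any natural number s, if the (s+1)-st term of the lower central series of N is contained in H, then the s-th term of the lower central series of N is contained in H. -/

import Mathlib

open scoped commutatorElement

/-- Let `N` be a group and `H` a self-normalizing subgroup of `N`.
If the `(s+1)`-st term of the lower central series of `N` is contained in `H`,
then so is the `s`-th term. -/
theorem lowerCentralSeries_le_of_succ_le
    {N : Type*} [Group N] (H : Subgroup N) (h : Subgroup.normalizer (H : Set N) = H)
    (s : ℕ) (hs : (⊤ : Subgroup N).lowerCentralSeries (s + 1) ≤ H) :
    (⊤ : Subgroup N).lowerCentralSeries s ≤ H := by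
  intro x hx
  rw [← h]
  rw [Subgroup.mem_normalizer_iff]
  have key : ∀ y ∈ (⊤ : Subgroup N).lowerCentralSeries s, ∀ g : N, g ∈ H → y * g * y⁻¹ ∈ H := by
    intro y hy g hg
    have hc : ⁅y, g⁆ ∈ (⊤ : Subgroup N).lowerCentralSeries (s + 1) := by
      rw [Subgroup.lowerCentralSeries_succ]
      exact Subgroup.commutator_mem_commutator hy (Subgroup.mem_top g)
    have := hs hc
    have : ⁅y, g⁆ * g ∈ H := H.mul_mem this hg
    simpa [commutatorElement_def, mul_assoc] using this
  intro g
  constructor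
  · exact fun hg => key x hx g hg
  · intro hg
    have := key x⁻¹ (((⊤ : Subgroup N).lowerCentralSeries s).inv_mem hx) _ hg
    simpa [mul_assoc] using this
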